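/- Path normalization lemma: for the split construction d' above, any Hamiltonian path in G' can be transformed, without increasing its total weight, into a Hamiltonian path that begins at v_out and ends at v_in; hence the minimum Hamiltonian path weight is attained by a path from v_out to v_in. -/

import Mathlib

/-- Weight of the Hamiltonian path visiting the vertices in the order
`σ 0, σ 1, …, σ (m-1)`. -/
def pathWeight {V : Type*} (m : ℕ) (d : V → V → ℕ) (σ : Fin m → V) : ℕ :=
  ∑ i : Fin m, if h : (i : ℕ) + 1 < m then d (σ i) (σ ⟨(i : ℕ) + 1, h⟩) else 0

/-- Vertex set of the split construction: `inl x` are the original vertices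
other than `v`, `inr true` is `v_out`, `inr false` is `v_in`. -/
abbrev SplitV (n : ℕ) (v : Fin n) := ({x : Fin n // x ≠ v}) ⊕ Bool

/-- Arc weights of the split construction. -/
def splitD {n : ℕ} (d : Fin n → Fin n → ℕ) (v : Fin n) (W : ℕ) :
    SplitV n v → SplitV n v → ℕ
  | Sum.inl x, Sum.inl y => d x.1 y.1
  | Sum.inr true, Sum.inl y => d v y.1
  | Sum.inl x, Sum.inr false => d x.1 v
  | Sum.inr true, Sum.inr false => 0
  | _, _ => 2 * W

namespace PN

section LW
variable {α : Type*}

/-- weight of the walk starting at `x` and continuing along the list -/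
def lwf (D : α → α → ℕ) : α → List α → ℕ
  | _, [] => 0
  | x, a :: t => D x a + lwf D a t

/-- weight of the walk along the list -/
def lw (D : α → α → ℕ) : List α → ℕ
  | [] => 0
  | a :: t => lwf D a t

def lastOf : α → List α → α
  | x, [] => x
  | _, a :: t => lastOf a t

@[simp] lemma lwf_nil (D : α → α → ℕ) (x : α) : lwf D x [] = 0 := rfl
@[simp] lemma lwf_cons (D : α → α → ℕ) (x a : α) (t : List α) :
    lwf D x (a :: t) = D x a + lwf D a t := rfl
@[simp] lemma lw_nil (D : α → α → ℕ) : lw D [] = 0 := rfl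
lemma lw_cons (D : α → α → ℕ) (a b : α) (t : List α) :
    lw D (a :: b :: t) = D a b + lw D (b :: t) := rfl
@[simp] lemma lw_eq_lwf (D : α → α → ℕ) (a : α) (t : List α) : lw D (a :: t) = lwf D a t := rfl
@[simp] lemma lastOf_nil (x : α) : lastOf x [] = x := rfl
@[simp] lemma lastOf_cons (x a : α) (t : List α) : lastOf x (a :: t) = lastOf a t := rfl

@[simp] lemma lwf_append (D : α → α → ℕ) (x : α) (A B : List α) :
    lwf D x (A ++ B) = lwf D x A + lwf D (lastOf x A) B := by
  induction A generalizing x with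
  | nil => simp
  | cons a t ih => simp [ih, Nat.add_assoc]

@[simp] lemma lastOf_append (x : α) (A B : List α) :
    lastOf x (A ++ B) = lastOf (lastOf x A) B := by
  induction A generalizing x with
  | nil => simp
  | cons a t ih => simp [ih]

lemma lastOf_ne {x s : α} {M : List α} (hx : x ≠ s) (hM : s ∉ M) : lastOf x M ≠ s := by
  induction M generalizing x with
  | nil => exact hx
  | cons a t ih =>
      simp only [List.mem_cons, not_or] at hM
      exact ih (fun h => hM.1 h.symm) hM.2

lemma pathWeight_eq_lw (D : α → α → ℕ) : ∀ (m : ℕ) (σ : Fin m → α),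
    pathWeight m D σ = lw D (List.ofFn σ) := by
  intro m
  induction m with
  | zero => intro σ; simp [pathWeight, lw]
  | succ k ih =>
      intro σ
      have hofn : List.ofFn σ = σ 0 :: List.ofFn (σ ∘ Fin.succ) := by
        simp [List.ofFn_succ]; rfl
      have hpw : pathWeight (k+1) D σ =
          (if h : 1 < k + 1 then D (σ 0) (σ ⟨1, h⟩) else 0) + pathWeight k D (σ ∘ Fin.succ) := by
        rw [pathWeight, Fin.sum_univ_succ]
        congr 1
        rw [pathWeight]
        apply Finset.sum_congr rfl
        intro i _
        by_cases h : (i : ℕ) + 1 < k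
        · rw [dif_pos h, dif_pos (by simp [Fin.val_succ]; omega :
            ((Fin.succ i : Fin (k+1)) : ℕ) + 1 < k + 1)]
          congr 1
        · rw [dif_neg h, dif_neg (by simp [Fin.val_succ]; omega)]
      rw [hpw, ih, hofn]
      cases k with
      | zero => simp [lw, List.ofFn_zero]
      | succ k' =>
          have h2 : List.ofFn (σ ∘ Fin.succ) =
              (σ ∘ Fin.succ) 0 :: List.ofFn ((σ ∘ Fin.succ) ∘ Fin.succ) := by
            simp [List.ofFn_succ]; rfl
          rw [h2, lw_cons, ← h2]
          rw [dif_pos (by omega : 1 < k' + 1 + 1)]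
          congr 1

end LW

variable {n : ℕ} {d : Fin n → Fin n → ℕ} {v : Fin n} {W : ℕ}

lemma D_into_out (a : SplitV n v) : splitD d v W a (Sum.inr true) = 2 * W := by
  rcases a with x | b
  · rfl
  · cases b <;> rfl

lemma D_from_in (b : SplitV n v) : splitD d v W (Sum.inr false) b = 2 * W := by
  rcases b with x | c
  · rfl
  · cases c <;> rfl

lemma D_le_W (hbd : ∀ x y, d x y ≤ W) (a b : SplitV n v)
    (ha : a ≠ Sum.inr false) (hb : b ≠ Sum.inr true) : splitD d v W a b ≤ W := by
  rcases a with x | c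
  · rcases b with y | c'
    · exact hbd _ _
    · cases c' with
      | true => exact absurd rfl hb
      | false => exact hbd _ _
  · cases c with
    | false => exact absurd rfl ha
    | true =>
        rcases b with y | c'
        · exact hbd _ _
        · cases c' with
          | true => exact absurd rfl hb
          | false => exact Nat.zero_le W

/-- Case 1 inequality: `L = C ++ OUT :: E1 ++ IN :: E2`. -/
lemma ineq1 (hbd : ∀ x y, d x y ≤ W) (C E1 E2 : List (SplitV n v))
    (hC_out : Sum.inr true ∉ C) (hC_in : Sum.inr false ∉ C)
    (hE1_in : Sum.inr false ∉ E1)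
    (hE2_out : Sum.inr true ∉ E2) (hE2_in : Sum.inr false ∉ E2) :
    lw (splitD d v W) (Sum.inr true :: (E1 ++ E2 ++ C) ++ [Sum.inr false]) ≤
    lw (splitD d v W) (C ++ Sum.inr true :: (E1 ++ Sum.inr false :: E2)) := by
  have ha1 : lastOf (Sum.inr true : SplitV n v) E1 ≠ Sum.inr false :=
    lastOf_ne (by simp) hE1_in
  rcases C with _ | ⟨c, C⟩ <;> rcases E2 with _ | ⟨e, E2⟩
  · -- C = [], E2 = []
    simp
  · -- C = [], E2 = e :: E2
    simp only [List.mem_cons, not_or] at hE2_out hE2_in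
    have h1 : splitD d v W (lastOf (Sum.inr true) E1) e ≤ W :=
      D_le_W hbd _ _ ha1 (fun h => hE2_out.1 h.symm)
    have h2 : splitD d v W (lastOf e E2) (Sum.inr false) ≤ W :=
      D_le_W hbd _ _ (lastOf_ne (fun h => hE2_in.1 h.symm) hE2_in.2) (by simp)
    simp only [lw_eq_lwf, List.append_nil, List.nil_append, List.cons_append,
      lwf_append, lwf_cons, lwf_nil, lastOf_append, lastOf_cons, lastOf_nil,
      D_from_in, D_into_out, Nat.add_zero]
    linarith
  · -- C = c :: C, E2 = []
    simp only [List.mem_cons, not_or] at hC_out hC_in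
    have h1 : splitD d v W (lastOf (Sum.inr true) E1) c ≤ W :=
      D_le_W hbd _ _ ha1 (fun h => hC_out.1 h.symm)
    have h2 : splitD d v W (lastOf c C) (Sum.inr false) ≤ W :=
      D_le_W hbd _ _ (lastOf_ne (fun h => hC_in.1 h.symm) hC_in.2) (by simp)
    simp only [lw_eq_lwf, List.append_nil, List.nil_append, List.cons_append,
      lwf_append, lwf_cons, lwf_nil, lastOf_append, lastOf_cons, lastOf_nil,
      D_from_in, D_into_out, Nat.add_zero]
    linarith
  · -- C = c :: C, E2 = e :: E2
    simp only [List.mem_cons, not_or] at hC_out hC_in hE2_out hE2_in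
    have h1 : splitD d v W (lastOf (Sum.inr true) E1) e ≤ W :=
      D_le_W hbd _ _ ha1 (fun h => hE2_out.1 h.symm)
    have h2 : splitD d v W (lastOf e E2) c ≤ W :=
      D_le_W hbd _ _ (lastOf_ne (fun h => hE2_in.1 h.symm) hE2_in.2) (fun h => hC_out.1 h.symm)
    have h3 : splitD d v W (lastOf c C) (Sum.inr false) ≤ W :=
      D_le_W hbd _ _ (lastOf_ne (fun h => hC_in.1 h.symm) hC_in.2) (by simp)
    simp only [lw_eq_lwf, List.append_nil, List.nil_append, List.cons_append,
      lwf_append, lwf_cons, lwf_nil, lastOf_append, lastOf_cons, lastOf_nil,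
      D_from_in, D_into_out, Nat.add_zero]
    linarith

/-- Case 2 inequality: `L = C1 ++ IN :: C2 ++ OUT :: E`. -/
lemma ineq2 (hbd : ∀ x y, d x y ≤ W) (C1 C2 E : List (SplitV n v))
    (hE_in : Sum.inr false ∉ E)
    (hC1_out : Sum.inr true ∉ C1) (hC1_in : Sum.inr false ∉ C1)
    (hC2_out : Sum.inr true ∉ C2) (hC2_in : Sum.inr false ∉ C2) :
    lw (splitD d v W) (Sum.inr true :: (E ++ C1 ++ C2) ++ [Sum.inr false]) ≤
    lw (splitD d v W) (C1 ++ Sum.inr false :: (C2 ++ Sum.inr true :: E)) := by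
  have hb1 : lastOf (Sum.inr true : SplitV n v) E ≠ Sum.inr false :=
    lastOf_ne (by simp) hE_in
  rcases C1 with _ | ⟨c, C1⟩ <;> rcases C2 with _ | ⟨e, C2⟩
  · -- C1 = [], C2 = []
    have h1 : splitD d v W (lastOf (Sum.inr true) E) (Sum.inr false) ≤ W :=
      D_le_W hbd _ _ hb1 (by simp)
    simp only [lw_eq_lwf, List.append_nil, List.nil_append, List.cons_append,
      lwf_append, lwf_cons, lwf_nil, lastOf_append, lastOf_cons, lastOf_nil,
      D_from_in, D_into_out, Nat.add_zero]
    linarith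
  · -- C1 = [], C2 = e :: C2
    simp only [List.mem_cons, not_or] at hC2_out hC2_in
    have h1 : splitD d v W (lastOf (Sum.inr true) E) e ≤ W :=
      D_le_W hbd _ _ hb1 (fun h => hC2_out.1 h.symm)
    have h2 : splitD d v W (lastOf e C2) (Sum.inr false) ≤ W :=
      D_le_W hbd _ _ (lastOf_ne (fun h => hC2_in.1 h.symm) hC2_in.2) (by simp)
    simp only [lw_eq_lwf, List.append_nil, List.nil_append, List.cons_append,
      lwf_append, lwf_cons, lwf_nil, lastOf_append, lastOf_cons, lastOf_nil,
      D_from_in, D_into_out, Nat.add_zero]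
    linarith
  · -- C1 = c :: C1, C2 = []
    simp only [List.mem_cons, not_or] at hC1_out hC1_in
    have h1 : splitD d v W (lastOf (Sum.inr true) E) c ≤ W :=
      D_le_W hbd _ _ hb1 (fun h => hC1_out.1 h.symm)
    have h2 : splitD d v W (lastOf c C1) (Sum.inr false) ≤ W :=
      D_le_W hbd _ _ (lastOf_ne (fun h => hC1_in.1 h.symm) hC1_in.2) (by simp)
    simp only [lw_eq_lwf, List.append_nil, List.nil_append, List.cons_append,
      lwf_append, lwf_cons, lwf_nil, lastOf_append, lastOf_cons, lastOf_nil,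
      D_from_in, D_into_out, Nat.add_zero]
    linarith
  · -- C1 = c :: C1, C2 = e :: C2
    simp only [List.mem_cons, not_or] at hC1_out hC1_in hC2_out hC2_in
    have h1 : splitD d v W (lastOf (Sum.inr true) E) c ≤ W :=
      D_le_W hbd _ _ hb1 (fun h => hC1_out.1 h.symm)
    have h2 : splitD d v W (lastOf c C1) e ≤ W :=
      D_le_W hbd _ _ (lastOf_ne (fun h => hC1_in.1 h.symm) hC1_in.2) (fun h => hC2_out.1 h.symm)
    have h3 : splitD d v W (lastOf e C2) (Sum.inr false) ≤ W :=
      D_le_W hbd _ _ (lastOf_ne (fun h => hC2_in.1 h.symm) hC2_in.2) (by simp)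
    simp only [lw_eq_lwf, List.append_nil, List.nil_append, List.cons_append,
      lwf_append, lwf_cons, lwf_nil, lastOf_append, lastOf_cons, lastOf_nil,
      D_from_in, D_into_out, Nat.add_zero]
    linarith

lemma nodup_extract {α : Type*} (C E1 E2 : List α) (a b : α)
    (hnd : (C ++ a :: (E1 ++ b :: E2)).Nodup) :
    a ∉ C ∧ b ∉ C ∧ a ∉ E1 ∧ b ∉ E1 ∧ a ∉ E2 ∧ b ∉ E2 := by
  simp only [List.nodup_append, List.nodup_cons, List.mem_append, List.mem_cons,
    List.disjoint_left, not_or] at hnd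
  exact ⟨fun h' => hnd.2.2 _ h' a (Or.inl rfl) rfl,
    fun h' => hnd.2.2 _ h' b (Or.inr (Or.inr (Or.inl rfl))) rfl,
    hnd.2.1.1.1, fun h' => hnd.2.1.2.2.2 _ h' b (Or.inl rfl) rfl, hnd.2.1.1.2.2, hnd.2.1.2.2.1.1⟩

/-- Master normalization lemma on lists. -/
lemma exists_norm (hbd : ∀ x y, d x y ≤ W) (L : List (SplitV n v)) (hnd : L.Nodup)
    (hOUT : (Sum.inr true : SplitV n v) ∈ L) (hIN : (Sum.inr false : SplitV n v) ∈ L) :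
    ∃ M : List (SplitV n v),
      (Sum.inr true :: M ++ [Sum.inr false]).Perm L ∧
      lw (splitD d v W) (Sum.inr true :: M ++ [Sum.inr false]) ≤ lw (splitD d v W) L := by
  obtain ⟨C, E, rfl⟩ := List.append_of_mem hOUT
  rcases List.mem_append.mp hIN with hInC | hInE'
  · -- IN ∈ C : case 2
    obtain ⟨C1, C2, rfl⟩ := List.append_of_mem hInC
    have hE : (Sum.inr false : SplitV n v) ∉ E ∧ (Sum.inr true : SplitV n v) ∉ C1 ∧
        (Sum.inr false : SplitV n v) ∉ C1 ∧ (Sum.inr true : SplitV n v) ∉ C2 ∧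
        (Sum.inr false : SplitV n v) ∉ C2 := by
      have h := nodup_extract C1 C2 E (Sum.inr false) (Sum.inr true)
        (by simpa [List.append_assoc] using hnd)
      exact ⟨h.2.2.2.2.1, h.2.1, h.1, h.2.2.2.1, h.2.2.1⟩
    refine ⟨E ++ C1 ++ C2, ?_, ?_⟩
    · letI : BEq (SplitV n v) := instBEqOfDecidableEq
      refine List.perm_iff_count.mpr (fun x => ?_)
      simp [List.count_append, List.count_cons]
      ring
    · have h := ineq2 hbd C1 C2 E hE.1 hE.2.1 hE.2.2.1 hE.2.2.2.1 hE.2.2.2.2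
      simpa [List.append_assoc] using h
  · -- IN ∈ E : case 1
    have hInE : (Sum.inr false : SplitV n v) ∈ E := by
      rcases List.mem_cons.mp hInE' with h | h
      · exact absurd h (by simp)
      · exact h
    obtain ⟨E1, E2, rfl⟩ := List.append_of_mem hInE
    have h := nodup_extract C E1 E2 (Sum.inr true) (Sum.inr false) hnd
    refine ⟨E1 ++ E2 ++ C, ?_, ?_⟩
    · letI : BEq (SplitV n v) := instBEqOfDecidableEq
      refine List.perm_iff_count.mpr (fun x => ?_)
      simp [List.count_append, List.count_cons]
      ring
    · exact ineq1 hbd C E1 E2 h.1 h.2.1 h.2.2.2.1 h.2.2.2.2.1 h.2.2.2.2.2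

/-- Normalization on the level of equivalences. -/
lemma exists_norm_equiv {n : ℕ} (d : Fin n → Fin n → ℕ) (W : ℕ) (v : Fin n)
    (hbd : ∀ x y, d x y ≤ W) (π : Fin (n + 1) ≃ SplitV n v) :
    ∃ π' : Fin (n + 1) ≃ SplitV n v,
      π' 0 = Sum.inr true ∧ π' (Fin.last n) = Sum.inr false ∧
      pathWeight (n + 1) (splitD d v W) π' ≤ pathWeight (n + 1) (splitD d v W) π := by
  classical
  set L : List (SplitV n v) := List.ofFn π with hL
  have hnd : L.Nodup := List.nodup_ofFn.mpr π.injective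
  have hmem : ∀ a, a ∈ L := fun a => List.mem_ofFn.mpr ⟨π.symm a, by simp⟩
  obtain ⟨M, hperm, hle⟩ := exists_norm hbd L hnd (hmem _) (hmem _)
  set L' : List (SplitV n v) := Sum.inr true :: M ++ [Sum.inr false] with hL'
  have hlen : L'.length = n + 1 := by
    rw [hperm.length_eq, hL, List.length_ofFn]
  have hnd' : L'.Nodup := hperm.nodup_iff.mpr hnd
  have hmem' : ∀ a, a ∈ L' := fun a => hperm.mem_iff.mpr (hmem a)
  let e := List.Nodup.getEquivOfForallMemList L' hnd' hmem'
  refine ⟨(finCongr hlen).symm.trans e, ?_, ?_, ?_⟩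
  · show L'.get ((finCongr hlen).symm 0) = Sum.inr true
    have : ((finCongr hlen).symm 0 : Fin L'.length) = ⟨0, by omega⟩ := by
      ext; simp
    rw [this]
    rfl
  · show L'.get ((finCongr hlen).symm (Fin.last n)) = Sum.inr false
    have hM : M.length + 2 = n + 1 := by simpa [hL'] using hlen
    have hidx : ((finCongr hlen).symm (Fin.last n) : Fin L'.length) =
        ⟨M.length + 1, by simp [hL']⟩ := by
      ext; simp [Fin.val_last]; try omega
    rw [hidx]
    show (Sum.inr true :: (M ++ [Sum.inr false]) : List (SplitV n v)).get ⟨M.length + 1, _⟩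
        = Sum.inr false
    simp [List.getElem_cons_succ, List.getElem_concat_length]
  · have hofn : List.ofFn ((finCongr hlen).symm.trans e) = L' := by
      apply List.ext_getElem
      · simp [hlen]
      · intro i h1 h2
        rw [List.getElem_ofFn]
        rfl
    rw [pathWeight_eq_lw, pathWeight_eq_lw, hofn, ← hL]
    exact hle

end PN




theorem path_normalization (n : ℕ) (hn : 0 < n) (d : Fin n → Fin n → ℕ)
    (W : ℕ) (v : Fin n)
    (hself : ∀ x, d x x = 0)
    (htri : ∀ x y z, d x z ≤ d x y + d y z)
    (hbd : ∀ x y, d x y ≤ W) :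
    (∀ π : Fin (n + 1) ≃ SplitV n v,
      ∃ π' : Fin (n + 1) ≃ SplitV n v,
        π' 0 = Sum.inr true ∧ π' (Fin.last n) = Sum.inr false ∧
        pathWeight (n + 1) (splitD d v W) π' ≤
          pathWeight (n + 1) (splitD d v W) π) ∧
    sInf {c | ∃ π : Fin (n + 1) ≃ SplitV n v,
        c = pathWeight (n + 1) (splitD d v W) π} =
      sInf {c | ∃ π : Fin (n + 1) ≃ SplitV n v,
        π 0 = Sum.inr true ∧ π (Fin.last n) = Sum.inr false ∧
        c = pathWeight (n + 1) (splitD d v W) π} := by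
  have hmain := PN.exists_norm_equiv d W v hbd
  refine ⟨hmain, ?_⟩
  set S1 : Set ℕ := {c | ∃ π : Fin (n + 1) ≃ SplitV n v,
      c = pathWeight (n + 1) (splitD d v W) π} with hS1
  set S2 : Set ℕ := {c | ∃ π : Fin (n + 1) ≃ SplitV n v,
      π 0 = Sum.inr true ∧ π (Fin.last n) = Sum.inr false ∧
      c = pathWeight (n + 1) (splitD d v W) π} with hS2
  have hsub : S2 ⊆ S1 := by
    rintro c ⟨π, _, _, hc⟩
    exact ⟨π, hc⟩
  rcases Set.eq_empty_or_nonempty S1 with hemp | hne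
  · have hemp2 : S2 = ∅ := Set.eq_empty_of_subset_empty (hemp ▸ hsub)
    rw [hemp, hemp2]
  · obtain ⟨π, hπ⟩ := Nat.sInf_mem hne
    obtain ⟨π', h0, hl, hle⟩ := hmain π
    have hmem2 : pathWeight (n + 1) (splitD d v W) π' ∈ S2 := ⟨π', h0, hl, rfl⟩
    have hne2 : S2.Nonempty := ⟨_, hmem2⟩
    refine le_antisymm ?_ ?_
    · exact Nat.sInf_le (hsub (Nat.sInf_mem hne2))
    · exact le_trans (Nat.sInf_le hmem2) (by rw [hπ]; exact hle)
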